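/- Pointwise version of the coincidence of projections: Let V be a finite-dimensional real vector space with nondegenerate bilinear form ω, and F, M ⊆ V subspaces with ⊥F ⊆ F, ⊥F ∩ M = {0}, V = ⊥F ⊕ M, and V = (M ∩ F) ⊕ ⊥(M ∩ F). Let 𝒫 : V → M be the projection along ⊥F and P : V → M ∩ F the projection along ⊥(M ∩ F). Then for every v ∈ F, 𝒫(v) = P(v). -/
import Mathlib


open Module

variable {V : Type*} [AddCommGroup V] [Module ℝ V]

/-- The right complement `D^⊥ = {v : ω(w,v) = 0 for all w ∈ D}`. -/
def rcompl (ω : V →ₗ[ℝ] V →ₗ[ℝ] ℝ) (D : Submodule ℝ V) : Submodule ℝ V where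
  carrier := {v | ∀ w ∈ D, ω w v = 0}
  add_mem' := by
    intro a b ha hb w hw
    simp [map_add, ha w hw, hb w hw]
  zero_mem' := by
    intro w hw
    simp
  smul_mem' := by
    intro c a ha w hw
    simp [ha w hw]

/-- The left complement `⊥D = {v : ω(v,w) = 0 for all w ∈ D}`. -/
def lcompl (ω : V →ₗ[ℝ] V →ₗ[ℝ] ℝ) (D : Submodule ℝ V) : Submodule ℝ V :=
  rcompl ω.flip D

/-- If `⊥F ⊆ F`, `V = ⊥F ⊕ M` and `V = (M ∩ F) ⊕ ⊥(M ∩ F)`, then the projection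
`𝒫` onto `M` along `⊥F` and the projection `P` onto `M ∩ F` along `⊥(M ∩ F)`
coincide on `F`. -/
theorem projections_coincide_on_F [FiniteDimensional ℝ V]
    (ω : V →ₗ[ℝ] V →ₗ[ℝ] ℝ) (hω : Function.Injective ω)
    (F M : Submodule ℝ V)
    (h1 : lcompl ω F ≤ F)
    (h2 : IsCompl (lcompl ω F) M)
    (h3 : IsCompl (M ⊓ F) (lcompl ω (M ⊓ F)))
    (P₁ : V →ₗ[ℝ] V) (hP₁M : ∀ v, P₁ v ∈ M) (hP₁Q : ∀ v, v - P₁ v ∈ lcompl ω F)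
    (P₂ : V →ₗ[ℝ] V) (hP₂M : ∀ v, P₂ v ∈ M ⊓ F)
    (hP₂Q : ∀ v, v - P₂ v ∈ lcompl ω (M ⊓ F)) :
    ∀ v ∈ F, P₁ v = P₂ v := by
  intro v hv
  have hanti : lcompl ω F ≤ lcompl ω (M ⊓ F) := by
    intro x hx w hw
    exact hx w hw.2
  have hP1F : P₁ v ∈ F := by
    have := h1 (hP₁Q v)
    have : v - (v - P₁ v) ∈ F := F.sub_mem hv this
    simpa using this
  have hmem1 : P₁ v - P₂ v ∈ M ⊓ F :=
    Submodule.sub_mem _ ⟨hP₁M v, hP1F⟩ (hP₂M v)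
  have hmem2 : P₁ v - P₂ v ∈ lcompl ω (M ⊓ F) := by
    have : P₁ v - P₂ v = (v - P₂ v) - (v - P₁ v) := by abel
    rw [this]
    exact Submodule.sub_mem _ (hP₂Q v) (hanti (hP₁Q v))
  have := h3.disjoint.eq_bot ▸ Submodule.mem_inf.mpr ⟨hmem1, hmem2⟩
  have h0 : P₁ v - P₂ v = 0 := by
    simpa using this
  exact sub_eq_zero.mp h0
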